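/- (Robbins–Siegmund) Let (Ω, Σ, P) be a probability space with a filtration (𝓕_t)_{t≥0}, and let (V_t), (f_t), (g_t), (h_t) be stochastic processes taking values in [0,∞), adapted to (𝓕_t), with each V_t integrable, satisfying E[V_{t+1} | 𝓕_t] ≤ (1 + f_t) V_t + g_t − h_t almost surely for every t. If Σ_{t=0}^∞ f_t < ∞ and Σ_{t=0}^∞ g_t < ∞ almost surely, then almost surely lim_{t→∞} V_t exists (so (V_t) is bounded almost surely) and Σ_{t=0}^∞ h_t < ∞. -/

import Mathlib

open MeasureTheory Filter Set

namespace RobbinsSiegmund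

variable {Ω : Type*}

def okS (f g : ℕ → Ω → ℝ) (n : ℕ) (t : ℕ) : Set Ω :=
  {ω | (∑ s ∈ Finset.range (t + 1), f s ω) ≤ n ∧ (∑ s ∈ Finset.range (t + 1), g s ω) ≤ n}

noncomputable def tr (f g : ℕ → Ω → ℝ) (n : ℕ) (p : ℕ → Ω → ℝ) (t : ℕ) : Ω → ℝ :=
  (okS f g n t).indicator (p t)

noncomputable def Vs (f g : ℕ → Ω → ℝ) (n : ℕ) (V : ℕ → Ω → ℝ) : ℕ → Ω → ℝ
  | 0 => V 0
  | t + 1 => (okS f g n t).indicator (V (t + 1)) + (okS f g n t)ᶜ.indicator (Vs f g n V t)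

noncomputable def Ap (f g : ℕ → Ω → ℝ) (n : ℕ) (t : ℕ) (ω : Ω) : ℝ :=
  ∏ s ∈ Finset.range t, (1 + tr f g n f s ω)

noncomputable def Xp (f g : ℕ → Ω → ℝ) (n : ℕ) (V h : ℕ → Ω → ℝ) (t : ℕ) (ω : Ω) : ℝ :=
  Vs f g n V t ω / Ap f g n t ω
    + ∑ s ∈ Finset.range t, (tr f g n h s ω - tr f g n g s ω) / Ap f g n (s + 1) ω

variable {f g V h : ℕ → Ω → ℝ} {n : ℕ}

section Elementary

variable (hfnn : ∀ t ω, 0 ≤ f t ω) (hgnn : ∀ t ω, 0 ≤ g t ω)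

/-- antitone of the ok events -/
theorem okS_anti (hfnn : ∀ t ω, 0 ≤ f t ω) (hgnn : ∀ t ω, 0 ≤ g t ω) {s t : ℕ} (hst : s ≤ t)
    {ω : Ω} (hω : ω ∈ okS f g n t) : ω ∈ okS f g n s := by
  obtain ⟨h1, h2⟩ := hω
  constructor
  · exact le_trans (Finset.sum_le_sum_of_subset_of_nonneg
      (Finset.range_subset_range.2 (by omega)) (fun i _ _ => hfnn i ω)) h1
  · exact le_trans (Finset.sum_le_sum_of_subset_of_nonneg
      (Finset.range_subset_range.2 (by omega)) (fun i _ _ => hgnn i ω)) h2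

theorem tr_nonneg {p : ℕ → Ω → ℝ} (hp : ∀ t ω, 0 ≤ p t ω) (t : ℕ) (ω : Ω) :
    0 ≤ tr f g n p t ω :=
  Set.indicator_nonneg (fun ω _ => hp t ω) ω

theorem tr_le {p : ℕ → Ω → ℝ} (hp : ∀ t ω, 0 ≤ p t ω) (t : ℕ) (ω : Ω) :
    tr f g n p t ω ≤ p t ω :=
  Set.indicator_le_self' (fun ω _ => hp t ω) ω

theorem tr_eq_of_mem {p : ℕ → Ω → ℝ} {t : ℕ} {ω : Ω} (hω : ω ∈ okS f g n t) :
    tr f g n p t ω = p t ω := Set.indicator_of_mem hω _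

theorem tr_eq_zero {p : ℕ → Ω → ℝ} {t : ℕ} {ω : Ω} (hω : ω ∉ okS f g n t) :
    tr f g n p t ω = 0 := Set.indicator_of_notMem hω _

/-- partial sums of truncated processes are bounded by n -/
theorem sum_tr_le (hfnn : ∀ t ω, 0 ≤ f t ω) (hgnn : ∀ t ω, 0 ≤ g t ω)
    {p : ℕ → Ω → ℝ}
    (hok : ∀ {t : ℕ} {ω : Ω}, ω ∈ okS f g n t → (∑ s ∈ Finset.range (t + 1), p s ω) ≤ n)
    (T : ℕ) (ω : Ω) :
    (∑ s ∈ Finset.range T, tr f g n p s ω) ≤ n := by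
  induction T with
  | zero => simp
  | succ T ih =>
    rw [Finset.sum_range_succ]
    by_cases hT : ω ∈ okS f g n T
    · have : ∀ s ∈ Finset.range (T + 1), tr f g n p s ω = p s ω := fun s hs =>
        tr_eq_of_mem (okS_anti hfnn hgnn (by simpa using Nat.lt_succ_iff.1 (Finset.mem_range.1 hs)) hT)
      rw [← Finset.sum_range_succ, Finset.sum_congr rfl this]
      exact hok hT
    · rw [tr_eq_zero hT, add_zero]; exact ih

theorem sum_trf_le (hfnn : ∀ t ω, 0 ≤ f t ω) (hgnn : ∀ t ω, 0 ≤ g t ω) (T : ℕ) (ω : Ω) :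
    (∑ s ∈ Finset.range T, tr f g n f s ω) ≤ n :=
  sum_tr_le hfnn hgnn (fun hω => hω.1) T ω

theorem sum_trg_le (hfnn : ∀ t ω, 0 ≤ f t ω) (hgnn : ∀ t ω, 0 ≤ g t ω) (T : ℕ) (ω : Ω) :
    (∑ s ∈ Finset.range T, tr f g n g s ω) ≤ n :=
  sum_tr_le hfnn hgnn (fun hω => hω.2) T ω

/-- single term bound -/
theorem tr_le_n {p : ℕ → Ω → ℝ} (hpnn : ∀ t ω, 0 ≤ p t ω)
    (hsum : ∀ T ω, (∑ s ∈ Finset.range T, tr f g n p s ω) ≤ n) (t : ℕ) (ω : Ω) :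
    tr f g n p t ω ≤ n :=
  le_trans (Finset.single_le_sum (f := fun s => tr f g n p s ω)
    (fun s _ => tr_nonneg hpnn s ω) (Finset.self_mem_range_succ t)) (hsum (t + 1) ω)

/-- Vs agrees with V on the ok event -/
theorem Vs_eq (hfnn : ∀ t ω, 0 ≤ f t ω) (hgnn : ∀ t ω, 0 ≤ g t ω) {t : ℕ} {ω : Ω}
    (hω : t = 0 ∨ ω ∈ okS f g n (t - 1)) : Vs f g n V t ω = V t ω := by
  induction t with
  | zero => rfl
  | succ t ih =>
    have hmem : ω ∈ okS f g n t := by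
      rcases hω with h | h
      · omega
      · simpa using h
    show (okS f g n t).indicator (V (t + 1)) ω + (okS f g n t)ᶜ.indicator (Vs f g n V t) ω = _
    rw [Set.indicator_of_mem hmem, Set.indicator_of_notMem (by simpa using hmem), add_zero]

theorem Vs_nonneg (hVnn : ∀ t ω, 0 ≤ V t ω) (t : ℕ) (ω : Ω) : 0 ≤ Vs f g n V t ω := by
  induction t with
  | zero => exact hVnn 0 ω
  | succ t ih =>
    refine add_nonneg (Set.indicator_nonneg (fun ω _ => hVnn _ ω) ω)
      (Set.indicator_nonneg (fun ω _ => ih) ω)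

theorem Ap_zero (ω : Ω) : Ap f g n 0 ω = 1 := by simp [Ap]

theorem Ap_succ (t : ℕ) (ω : Ω) :
    Ap f g n (t + 1) ω = Ap f g n t ω * (1 + tr f g n f t ω) := Finset.prod_range_succ _ _

theorem one_le_Ap (hfnn : ∀ t ω, 0 ≤ f t ω) (t : ℕ) (ω : Ω) : 1 ≤ Ap f g n t ω := by
  induction t with
  | zero => rw [Ap_zero]
  | succ t ih =>
    rw [Ap_succ]
    have := tr_nonneg (f := f) (g := g) (n := n) hfnn t ω
    nlinarith

theorem Ap_pos (hfnn : ∀ t ω, 0 ≤ f t ω) (t : ℕ) (ω : Ω) : 0 < Ap f g n t ω :=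
  lt_of_lt_of_le one_pos (one_le_Ap hfnn t ω)

theorem Ap_mono (hfnn : ∀ t ω, 0 ≤ f t ω) {s t : ℕ} (hst : s ≤ t) (ω : Ω) :
    Ap f g n s ω ≤ Ap f g n t ω := by
  have hm : Monotone (fun t => Ap f g n t ω) := by
    apply monotone_nat_of_le_succ
    intro t
    rw [Ap_succ]
    have h1 := tr_nonneg (f := f) (g := g) (n := n) hfnn t ω
    have h2 := Ap_pos (g := g) (n := n) hfnn t ω
    nlinarith
  exact hm hst

theorem Ap_le_exp (hfnn : ∀ t ω, 0 ≤ f t ω) (hgnn : ∀ t ω, 0 ≤ g t ω) (t : ℕ) (ω : Ω) :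
    Ap f g n t ω ≤ Real.exp n := by
  have h1 : Ap f g n t ω ≤ ∏ s ∈ Finset.range t, Real.exp (tr f g n f s ω) := by
    refine Finset.prod_le_prod ?_ ?_
    · intro s _
      have := tr_nonneg (f := f) (g := g) (n := n) hfnn s ω
      linarith
    · intro s _
      rw [add_comm]
      exact Real.add_one_le_exp _
  rw [← Real.exp_sum] at h1
  exact h1.trans (Real.exp_le_exp.2 (sum_trf_le hfnn hgnn t ω))

end Elementary

section Meas

variable {mΩ : MeasurableSpace Ω} {𝓕 : Filtration ℕ mΩ}

theorem okS_measurableSet (hfadp : Adapted 𝓕 f) (hgadp : Adapted 𝓕 g) (t : ℕ) :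
    MeasurableSet[𝓕 t] (okS f g n t) := by
  have hfm : Measurable[𝓕 t] fun ω => ∑ s ∈ Finset.range (t + 1), f s ω := by
    apply Finset.measurable_sum
    intro s hs
    exact (hfadp s).mono (𝓕.mono (Nat.lt_succ_iff.1 (Finset.mem_range.1 hs))) le_rfl
  have hgm : Measurable[𝓕 t] fun ω => ∑ s ∈ Finset.range (t + 1), g s ω := by
    apply Finset.measurable_sum
    intro s hs
    exact (hgadp s).mono (𝓕.mono (Nat.lt_succ_iff.1 (Finset.mem_range.1 hs))) le_rfl
  exact (measurableSet_le hfm measurable_const).inter (measurableSet_le hgm measurable_const)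

theorem tr_stronglyMeasurable (hfadp : Adapted 𝓕 f) (hgadp : Adapted 𝓕 g)
    {p : ℕ → Ω → ℝ} (hpadp : Adapted 𝓕 p) (t : ℕ) :
    StronglyMeasurable[𝓕 t] (tr f g n p t) :=
  (hpadp t).stronglyMeasurable.indicator (okS_measurableSet hfadp hgadp t)

theorem Vs_stronglyMeasurable (hfadp : Adapted 𝓕 f) (hgadp : Adapted 𝓕 g)
    (hVadp : Adapted 𝓕 V) (t : ℕ) :
    StronglyMeasurable[𝓕 t] (Vs f g n V t) := by
  induction t with
  | zero => exact (hVadp 0).stronglyMeasurable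
  | succ t ih =>
    exact ((hVadp (t + 1)).stronglyMeasurable.indicator
        ((𝓕.mono (Nat.le_succ t)) _ (okS_measurableSet hfadp hgadp t))).add
      ((ih.mono (𝓕.mono (Nat.le_succ t))).indicator
        ((𝓕.mono (Nat.le_succ t)) _ (okS_measurableSet hfadp hgadp t).compl))

variable {P : Measure Ω}

theorem Vs_integrable (hfadp : Adapted 𝓕 f) (hgadp : Adapted 𝓕 g)
    (hVint : ∀ t, Integrable (V t) P) (t : ℕ) :
    Integrable (Vs f g n V t) P := by
  induction t with
  | zero => exact hVint 0
  | succ t ih =>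
    exact ((hVint (t + 1)).indicator (𝓕.le t _ (okS_measurableSet hfadp hgadp t))).add
      (ih.indicator (𝓕.le t _ (okS_measurableSet hfadp hgadp t).compl))

theorem Ap_stronglyMeasurable (hfadp : Adapted 𝓕 f) (hgadp : Adapted 𝓕 g) {k t : ℕ}
    (hkt : k ≤ t + 1) : StronglyMeasurable[𝓕 t] (Ap f g n k) := by
  apply Finset.stronglyMeasurable_fun_prod
  intro s hs
  have hst : s ≤ t := by
    have := Finset.mem_range.1 hs
    omega
  exact (stronglyMeasurable_const.add
    ((tr_stronglyMeasurable hfadp hgadp hfadp s).mono (𝓕.mono hst)))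

theorem Ap_stronglyMeasurable' (hfadp : Adapted 𝓕 f) (hgadp : Adapted 𝓕 g) (t : ℕ) :
    StronglyMeasurable[𝓕 t] (Ap f g n t) :=
  Ap_stronglyMeasurable hfadp hgadp (Nat.le_succ t)

end Meas

section Condexp

variable {mΩ : MeasurableSpace Ω} {𝓕 : Filtration ℕ mΩ} {P : Measure Ω}
  [IsProbabilityMeasure P]

theorem key_ineq (hfnn : ∀ t ω, 0 ≤ f t ω) (hgnn : ∀ t ω, 0 ≤ g t ω)
    (hfadp : Adapted 𝓕 f) (hgadp : Adapted 𝓕 g) (hVadp : Adapted 𝓕 V)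
    (hVint : ∀ t, Integrable (V t) P)
    (hineq : ∀ t, ∀ᵐ ω ∂P,
      (P[V (t + 1)|𝓕 t]) ω ≤ (1 + f t ω) * V t ω + g t ω - h t ω) (t : ℕ) :
    ∀ᵐ ω ∂P, (P[Vs f g n V (t + 1)|𝓕 t]) ω ≤
      (1 + tr f g n f t ω) * Vs f g n V t ω + tr f g n g t ω - tr f g n h t ω := by
  have hok := okS_measurableSet (n := n) hfadp hgadp t
  have hVsm := Vs_stronglyMeasurable (n := n) hfadp hgadp hVadp t
  have hVsint := Vs_integrable (n := n) hfadp hgadp hVint t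
  have e0 : Vs f g n V (t + 1) =
      (okS f g n t).indicator (V (t + 1)) + (okS f g n t)ᶜ.indicator (Vs f g n V t) := rfl
  have e1 : P[Vs f g n V (t + 1)|𝓕 t] =ᵐ[P]
      P[(okS f g n t).indicator (V (t + 1))|𝓕 t]
        + P[(okS f g n t)ᶜ.indicator (Vs f g n V t)|𝓕 t] := by
    rw [e0]
    exact condExp_add ((hVint (t + 1)).indicator (𝓕.le t _ hok))
      (hVsint.indicator (𝓕.le t _ hok.compl)) _
  have e2 : P[(okS f g n t).indicator (V (t + 1))|𝓕 t] =ᵐ[P]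
      (okS f g n t).indicator (P[V (t + 1)|𝓕 t]) :=
    condExp_indicator (hVint (t + 1)) hok
  have e3 : P[(okS f g n t)ᶜ.indicator (Vs f g n V t)|𝓕 t] =
      (okS f g n t)ᶜ.indicator (Vs f g n V t) :=
    condExp_of_stronglyMeasurable (𝓕.le t) (hVsm.indicator hok.compl)
      (hVsint.indicator (𝓕.le t _ hok.compl))
  filter_upwards [e1, e2, hineq t] with ω h1 h2 h4
  rw [h1, Pi.add_apply, h2, e3]
  by_cases hω : ω ∈ okS f g n t
  · rw [Set.indicator_of_mem hω, Set.indicator_of_notMem (by simpa using hω),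
      tr_eq_of_mem hω, tr_eq_of_mem hω, tr_eq_of_mem hω, add_zero,
      Vs_eq hfnn hgnn (Or.inr (okS_anti hfnn hgnn (Nat.sub_le t 1) hω))]
    exact h4
  · rw [Set.indicator_of_notMem hω, Set.indicator_of_mem (by simpa using hω),
      tr_eq_zero hω, tr_eq_zero hω, tr_eq_zero hω]
    ring_nf
    simp

theorem tr_h_le_ae (hVnn : ∀ t ω, 0 ≤ V t ω) (hfnn : ∀ t ω, 0 ≤ f t ω)
    (hgnn : ∀ t ω, 0 ≤ g t ω)
    (hfadp : Adapted 𝓕 f) (hgadp : Adapted 𝓕 g) (hVadp : Adapted 𝓕 V)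
    (hVint : ∀ t, Integrable (V t) P)
    (hineq : ∀ t, ∀ᵐ ω ∂P,
      (P[V (t + 1)|𝓕 t]) ω ≤ (1 + f t ω) * V t ω + g t ω - h t ω) (t : ℕ) :
    ∀ᵐ ω ∂P, tr f g n h t ω ≤ (1 + n) * Vs f g n V t ω + n := by
  have hnn : ∀ᵐ ω ∂P, 0 ≤ (P[Vs f g n V (t + 1)|𝓕 t]) ω :=
    condExp_nonneg (Filter.Eventually.of_forall fun ω => Vs_nonneg hVnn (t + 1) ω)
  filter_upwards [hnn, key_ineq hfnn hgnn hfadp hgadp hVadp hVint hineq t] with ω h0 h1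
  have h2 : tr f g n h t ω ≤ (1 + tr f g n f t ω) * Vs f g n V t ω + tr f g n g t ω := by
    linarith
  have h3 : tr f g n f t ω ≤ n := tr_le_n hfnn (sum_trf_le hfnn hgnn) t ω
  have h4 : tr f g n g t ω ≤ n := tr_le_n hgnn (sum_trg_le hfnn hgnn) t ω
  have h5 : 0 ≤ Vs f g n V t ω := Vs_nonneg hVnn t ω
  nlinarith

theorem tr_integrable_of_bdd {p : ℕ → Ω → ℝ} (hfadp : Adapted 𝓕 f) (hgadp : Adapted 𝓕 g)
    (hpadp : Adapted 𝓕 p) (hpnn : ∀ t ω, 0 ≤ p t ω)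
    (hbd : ∀ t ω, tr f g n p t ω ≤ n) (t : ℕ) :
    Integrable (tr f g n p t) P := by
  refine Integrable.mono' (integrable_const (n : ℝ))
    (((tr_stronglyMeasurable hfadp hgadp hpadp t).mono (𝓕.le t)).aestronglyMeasurable) ?_
  refine Filter.Eventually.of_forall fun ω => ?_
  rw [Real.norm_eq_abs, abs_of_nonneg (tr_nonneg hpnn t ω)]
  exact hbd t ω

theorem tr_h_integrable (hVnn : ∀ t ω, 0 ≤ V t ω) (hfnn : ∀ t ω, 0 ≤ f t ω)
    (hgnn : ∀ t ω, 0 ≤ g t ω) (hhnn : ∀ t ω, 0 ≤ h t ω)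
    (hfadp : Adapted 𝓕 f) (hgadp : Adapted 𝓕 g) (hVadp : Adapted 𝓕 V) (hhadp : Adapted 𝓕 h)
    (hVint : ∀ t, Integrable (V t) P)
    (hineq : ∀ t, ∀ᵐ ω ∂P,
      (P[V (t + 1)|𝓕 t]) ω ≤ (1 + f t ω) * V t ω + g t ω - h t ω) (t : ℕ) :
    Integrable (tr f g n h t) P := by
  refine Integrable.mono'
    ((((Vs_integrable (n := n) hfadp hgadp hVint t).const_mul (1 + n)).add
      (integrable_const (n : ℝ))))
    (((tr_stronglyMeasurable hfadp hgadp hhadp t).mono (𝓕.le t)).aestronglyMeasurable) ?_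
  filter_upwards [tr_h_le_ae hVnn hfnn hgnn hfadp hgadp hVadp hVint hineq t] with ω hω
  rw [Real.norm_eq_abs, abs_of_nonneg (tr_nonneg hhnn t ω)]
  exact hω

theorem inv_Ap_bdd_mul (hfnn : ∀ t ω, 0 ≤ f t ω) (hfadp : Adapted 𝓕 f) (hgadp : Adapted 𝓕 g)
    {q : Ω → ℝ} (hq : Integrable q P) {k t : ℕ} (hkt : k ≤ t + 1) :
    Integrable (fun ω => (Ap f g n k ω)⁻¹ * q ω) P := by
  refine Integrable.bdd_mul (c := 1) hq ?_ (Filter.Eventually.of_forall fun ω => ?_)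
  · exact (((Ap_stronglyMeasurable (n := n) hfadp hgadp hkt).mono
      (𝓕.le t)).measurable.inv).aestronglyMeasurable
  · rw [Real.norm_eq_abs, abs_of_nonneg (inv_nonneg.2 (Ap_pos hfnn k ω).le)]
    rw [inv_le_one_iff₀]
    right
    exact one_le_Ap hfnn k ω

theorem Xp_eq (t : ℕ) (ω : Ω) : Xp f g n V h t ω =
    (Ap f g n t ω)⁻¹ * Vs f g n V t ω
      + ∑ s ∈ Finset.range t, (Ap f g n (s + 1) ω)⁻¹ * (tr f g n h s ω - tr f g n g s ω) := by
  unfold Xp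
  rw [div_eq_mul_inv, mul_comm]
  congr 1
  refine Finset.sum_congr rfl fun s _ => ?_
  rw [div_eq_mul_inv, mul_comm]

theorem Xp_integrable (hVnn : ∀ t ω, 0 ≤ V t ω) (hfnn : ∀ t ω, 0 ≤ f t ω)
    (hgnn : ∀ t ω, 0 ≤ g t ω) (hhnn : ∀ t ω, 0 ≤ h t ω)
    (hfadp : Adapted 𝓕 f) (hgadp : Adapted 𝓕 g) (hVadp : Adapted 𝓕 V) (hhadp : Adapted 𝓕 h)
    (hVint : ∀ t, Integrable (V t) P)
    (hineq : ∀ t, ∀ᵐ ω ∂P,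
      (P[V (t + 1)|𝓕 t]) ω ≤ (1 + f t ω) * V t ω + g t ω - h t ω) (t : ℕ) :
    Integrable (Xp f g n V h t) P := by
  have e : Xp f g n V h t = (fun ω => (Ap f g n t ω)⁻¹ * Vs f g n V t ω)
      + fun ω => ∑ s ∈ Finset.range t,
        (Ap f g n (s + 1) ω)⁻¹ * (tr f g n h s ω - tr f g n g s ω) :=
    funext fun ω => Xp_eq t ω
  rw [e]
  refine Integrable.add
    (inv_Ap_bdd_mul hfnn hfadp hgadp (Vs_integrable hfadp hgadp hVint t) (Nat.le_succ t)) ?_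
  apply integrable_finset_sum
  intro s hs
  have hst : s + 1 ≤ t + 1 := by
    have := Finset.mem_range.1 hs
    omega
  refine inv_Ap_bdd_mul hfnn hfadp hgadp ?_ hst
  exact (tr_h_integrable hVnn hfnn hgnn hhnn hfadp hgadp hVadp hhadp hVint hineq s).sub
    (tr_integrable_of_bdd hfadp hgadp hgadp hgnn
      (fun t ω => tr_le_n hgnn (sum_trg_le hfnn hgnn) t ω) s)

theorem Xp_adapted (hfadp : Adapted 𝓕 f) (hgadp : Adapted 𝓕 g) (hVadp : Adapted 𝓕 V)
    (hhadp : Adapted 𝓕 h) : Adapted 𝓕 (Xp f g n V h) := by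
  intro t
  have e : Xp f g n V h t = fun ω => (Ap f g n t ω)⁻¹ * Vs f g n V t ω
      + ∑ s ∈ Finset.range t,
        (Ap f g n (s + 1) ω)⁻¹ * (tr f g n h s ω - tr f g n g s ω) :=
    funext fun ω => Xp_eq t ω
  rw [e]
  refine Measurable.add ?_ ?_
  · exact ((Ap_stronglyMeasurable' (n := n) hfadp hgadp t).measurable.inv).mul
      ((Vs_stronglyMeasurable hfadp hgadp hVadp t).measurable)
  · apply Finset.measurable_sum
    intro s hs
    have hst : s ≤ t := by
      have := Finset.mem_range.1 hs
      omega
    have h1 : Measurable[𝓕 t] (Ap f g n (s + 1)) :=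
      ((Ap_stronglyMeasurable (n := n) (t := s) hfadp hgadp le_rfl).mono (𝓕.mono hst)).measurable
    have h2 : Measurable[𝓕 t] (tr f g n h s) :=
      ((tr_stronglyMeasurable hfadp hgadp hhadp s).mono (𝓕.mono hst)).measurable
    have h3 : Measurable[𝓕 t] (tr f g n g s) :=
      ((tr_stronglyMeasurable hfadp hgadp hgadp s).mono (𝓕.mono hst)).measurable
    exact h1.inv.mul (h2.sub h3)

theorem Xp_supermart (hVnn : ∀ t ω, 0 ≤ V t ω) (hfnn : ∀ t ω, 0 ≤ f t ω)
    (hgnn : ∀ t ω, 0 ≤ g t ω) (hhnn : ∀ t ω, 0 ≤ h t ω)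
    (hfadp : Adapted 𝓕 f) (hgadp : Adapted 𝓕 g) (hVadp : Adapted 𝓕 V) (hhadp : Adapted 𝓕 h)
    (hVint : ∀ t, Integrable (V t) P)
    (hineq : ∀ t, ∀ᵐ ω ∂P,
      (P[V (t + 1)|𝓕 t]) ω ≤ (1 + f t ω) * V t ω + g t ω - h t ω) (t : ℕ) :
    ∀ᵐ ω ∂P, (P[Xp f g n V h (t + 1)|𝓕 t]) ω ≤ Xp f g n V h t ω := by
  have hint1 : Integrable (fun ω => (Ap f g n (t + 1) ω)⁻¹ * Vs f g n V (t + 1) ω) P :=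
    inv_Ap_bdd_mul (t := t) hfnn hfadp hgadp (Vs_integrable hfadp hgadp hVint (t + 1)) le_rfl
  have hintD : Integrable (fun ω => ∑ s ∈ Finset.range (t + 1),
      (Ap f g n (s + 1) ω)⁻¹ * (tr f g n h s ω - tr f g n g s ω)) P := by
    apply integrable_finset_sum
    intro s hs
    have hst : s + 1 ≤ t + 1 := by
      have := Finset.mem_range.1 hs
      omega
    refine inv_Ap_bdd_mul hfnn hfadp hgadp ?_ hst
    exact (tr_h_integrable hVnn hfnn hgnn hhnn hfadp hgadp hVadp hhadp hVint hineq s).sub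
      (tr_integrable_of_bdd hfadp hgadp hgadp hgnn
        (fun t ω => tr_le_n hgnn (sum_trg_le hfnn hgnn) t ω) s)
  have hDsm : StronglyMeasurable[𝓕 t] (fun ω => ∑ s ∈ Finset.range (t + 1),
      (Ap f g n (s + 1) ω)⁻¹ * (tr f g n h s ω - tr f g n g s ω)) := by
    apply Measurable.stronglyMeasurable
    apply Finset.measurable_sum
    intro s hs
    have hst : s ≤ t := by
      have := Finset.mem_range.1 hs
      omega
    have h1 : Measurable[𝓕 t] (Ap f g n (s + 1)) :=
      ((Ap_stronglyMeasurable (n := n) (t := s) hfadp hgadp le_rfl).mono (𝓕.mono hst)).measurable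
    have h2 : Measurable[𝓕 t] (tr f g n h s) :=
      ((tr_stronglyMeasurable hfadp hgadp hhadp s).mono (𝓕.mono hst)).measurable
    have h3 : Measurable[𝓕 t] (tr f g n g s) :=
      ((tr_stronglyMeasurable hfadp hgadp hgadp s).mono (𝓕.mono hst)).measurable
    exact h1.inv.mul (h2.sub h3)
  have hAsm : StronglyMeasurable[𝓕 t] (fun ω => (Ap f g n (t + 1) ω)⁻¹) :=
    ((Ap_stronglyMeasurable (n := n) hfadp hgadp le_rfl).measurable.inv).stronglyMeasurable
  have e0 : Xp f g n V h (t + 1) = (fun ω => (Ap f g n (t + 1) ω)⁻¹ * Vs f g n V (t + 1) ω)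
      + (fun ω => ∑ s ∈ Finset.range (t + 1),
        (Ap f g n (s + 1) ω)⁻¹ * (tr f g n h s ω - tr f g n g s ω)) :=
    funext fun ω => Xp_eq (t + 1) ω
  have e1 : P[Xp f g n V h (t + 1)|𝓕 t] =ᵐ[P]
      P[fun ω => (Ap f g n (t + 1) ω)⁻¹ * Vs f g n V (t + 1) ω|𝓕 t]
        + P[fun ω => ∑ s ∈ Finset.range (t + 1),
          (Ap f g n (s + 1) ω)⁻¹ * (tr f g n h s ω - tr f g n g s ω)|𝓕 t] := by
    rw [e0]
    exact condExp_add hint1 hintD _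
  have e2 : P[fun ω => ∑ s ∈ Finset.range (t + 1),
      (Ap f g n (s + 1) ω)⁻¹ * (tr f g n h s ω - tr f g n g s ω)|𝓕 t]
      = fun ω => ∑ s ∈ Finset.range (t + 1),
        (Ap f g n (s + 1) ω)⁻¹ * (tr f g n h s ω - tr f g n g s ω) :=
    condExp_of_stronglyMeasurable (𝓕.le t) hDsm hintD
  have e3 : P[fun ω => (Ap f g n (t + 1) ω)⁻¹ * Vs f g n V (t + 1) ω|𝓕 t] =ᵐ[P]
      (fun ω => (Ap f g n (t + 1) ω)⁻¹) * P[Vs f g n V (t + 1)|𝓕 t] :=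
    condExp_mul_of_stronglyMeasurable_left hAsm hint1 (Vs_integrable hfadp hgadp hVint (t + 1))
  filter_upwards [e1, e3, key_ineq hfnn hgnn hfadp hgadp hVadp hVint hineq t] with ω h1 h3 hk
  rw [h1, Pi.add_apply, h3, e2, Pi.mul_apply]
  have hApos : 0 < Ap f g n t ω := Ap_pos hfnn t ω
  have hφ : 0 ≤ tr f g n f t ω := tr_nonneg hfnn t ω
  have hA1pos : 0 < Ap f g n (t + 1) ω := Ap_pos hfnn (t + 1) ω
  have hstep : (Ap f g n (t + 1) ω)⁻¹ * (P[Vs f g n V (t + 1)|𝓕 t]) ω ≤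
      (Ap f g n (t + 1) ω)⁻¹ * ((1 + tr f g n f t ω) * Vs f g n V t ω
        + tr f g n g t ω - tr f g n h t ω) :=
    mul_le_mul_of_nonneg_left hk (inv_nonneg.2 hA1pos.le)
  show (Ap f g n (t + 1) ω)⁻¹ * (P[Vs f g n V (t + 1)|𝓕 t]) ω
      + (∑ s ∈ Finset.range (t + 1),
        (Ap f g n (s + 1) ω)⁻¹ * (tr f g n h s ω - tr f g n g s ω)) ≤ Xp f g n V h t ω
  refine le_trans (add_le_add hstep le_rfl) (le_of_eq ?_)
  rw [Xp_eq t ω, Finset.sum_range_succ]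
  rw [Ap_succ]
  have h1φ : (0:ℝ) < 1 + tr f g n f t ω := by linarith
  field_simp
  ring

theorem Xp_lb (hVnn : ∀ t ω, 0 ≤ V t ω) (hfnn : ∀ t ω, 0 ≤ f t ω)
    (hgnn : ∀ t ω, 0 ≤ g t ω) (hhnn : ∀ t ω, 0 ≤ h t ω) (t : ℕ) (ω : Ω) :
    -(n : ℝ) ≤ Xp f g n V h t ω := by
  have h1 : ∀ s, -(tr f g n g s ω) ≤ (tr f g n h s ω - tr f g n g s ω) / Ap f g n (s + 1) ω := by
    intro s
    have hA := one_le_Ap (n := n) (g := g) hfnn (s + 1) ω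
    have hApos : (0:ℝ) < Ap f g n (s + 1) ω := by linarith
    have step1 : -(tr f g n g s ω) / Ap f g n (s + 1) ω ≤
        (tr f g n h s ω - tr f g n g s ω) / Ap f g n (s + 1) ω := by
      have hnum : -(tr f g n g s ω) ≤ tr f g n h s ω - tr f g n g s ω := by
        have := tr_nonneg (f := f) (g := g) (n := n) hhnn s ω
        linarith
      exact div_le_div_of_nonneg_right hnum hApos.le
    refine le_trans ?_ step1
    rw [neg_div, neg_le_neg_iff]
    exact div_le_self (tr_nonneg hgnn s ω) hA
  have h2 : -(n:ℝ) ≤ ∑ s ∈ Finset.range t,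
      (tr f g n h s ω - tr f g n g s ω) / Ap f g n (s + 1) ω := by
    calc -(n:ℝ) ≤ -∑ s ∈ Finset.range t, tr f g n g s ω := by
          simpa using neg_le_neg (sum_trg_le hfnn hgnn t ω)
      _ = ∑ s ∈ Finset.range t, -(tr f g n g s ω) := by rw [Finset.sum_neg_distrib]
      _ ≤ _ := Finset.sum_le_sum fun s _ => h1 s
  have h3 : 0 ≤ Vs f g n V t ω / Ap f g n t ω :=
    div_nonneg (Vs_nonneg hVnn t ω) (Ap_pos hfnn t ω).le
  unfold Xp
  linarith

theorem Xp_zero : Xp f g n V h 0 = V 0 := by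
  funext ω
  simp [Xp, Ap]
  rfl

theorem integral_Xp_le (hVnn : ∀ t ω, 0 ≤ V t ω) (hfnn : ∀ t ω, 0 ≤ f t ω)
    (hgnn : ∀ t ω, 0 ≤ g t ω) (hhnn : ∀ t ω, 0 ≤ h t ω)
    (hfadp : Adapted 𝓕 f) (hgadp : Adapted 𝓕 g) (hVadp : Adapted 𝓕 V) (hhadp : Adapted 𝓕 h)
    (hVint : ∀ t, Integrable (V t) P)
    (hineq : ∀ t, ∀ᵐ ω ∂P,
      (P[V (t + 1)|𝓕 t]) ω ≤ (1 + f t ω) * V t ω + g t ω - h t ω) (t : ℕ) :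
    ∫ ω, Xp f g n V h t ω ∂P ≤ ∫ ω, V 0 ω ∂P := by
  induction t with
  | zero => rw [Xp_zero]
  | succ t ih =>
    refine le_trans ?_ ih
    have e1 : ∫ ω, Xp f g n V h (t + 1) ω ∂P = ∫ ω, (P[Xp f g n V h (t + 1)|𝓕 t]) ω ∂P :=
      (integral_condExp (𝓕.le t)).symm
    rw [e1]
    exact integral_mono_ae integrable_condExp
      (Xp_integrable hVnn hfnn hgnn hhnn hfadp hgadp hVadp hhadp hVint hineq t)
      (Xp_supermart hVnn hfnn hgnn hhnn hfadp hgadp hVadp hhadp hVint hineq t)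

theorem eLpNorm_Xp_le (hVnn : ∀ t ω, 0 ≤ V t ω) (hfnn : ∀ t ω, 0 ≤ f t ω)
    (hgnn : ∀ t ω, 0 ≤ g t ω) (hhnn : ∀ t ω, 0 ≤ h t ω)
    (hfadp : Adapted 𝓕 f) (hgadp : Adapted 𝓕 g) (hVadp : Adapted 𝓕 V) (hhadp : Adapted 𝓕 h)
    (hVint : ∀ t, Integrable (V t) P)
    (hineq : ∀ t, ∀ᵐ ω ∂P,
      (P[V (t + 1)|𝓕 t]) ω ≤ (1 + f t ω) * V t ω + g t ω - h t ω) (t : ℕ) :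
    eLpNorm (Xp f g n V h t) 1 P ≤ ENNReal.ofReal ((∫ ω, V 0 ω ∂P) + 2 * n) := by
  have hXint := Xp_integrable hVnn hfnn hgnn hhnn hfadp hgadp hVadp hhadp hVint hineq (n := n) t
  rw [eLpNorm_one_eq_lintegral_enorm, ← ofReal_integral_norm_eq_lintegral_enorm hXint]
  apply ENNReal.ofReal_le_ofReal
  have h1 : ∫ ω, ‖Xp f g n V h t ω‖ ∂P ≤ ∫ ω, (Xp f g n V h t ω + 2 * n) ∂P := by
    refine integral_mono hXint.norm (hXint.add (integrable_const _)) fun ω => ?_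
    have hlb := Xp_lb (n := n) hVnn hfnn hgnn hhnn t ω
    rw [Real.norm_eq_abs]
    rcases abs_cases (Xp f g n V h t ω) with ⟨he, _⟩ | ⟨he, _⟩ <;> rw [he] <;> push_cast <;>
      [linarith [Nat.cast_nonneg (α := ℝ) n]; linarith]
  refine h1.trans ?_
  rw [integral_add hXint (integrable_const _), integral_const]
  simp only [probReal_univ, one_smul]
  have := integral_Xp_le hVnn hfnn hgnn hhnn hfadp hgadp hVadp hhadp hVint hineq (n := n) t
  linarith

theorem Xp_tendsto (hVnn : ∀ t ω, 0 ≤ V t ω) (hfnn : ∀ t ω, 0 ≤ f t ω)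
    (hgnn : ∀ t ω, 0 ≤ g t ω) (hhnn : ∀ t ω, 0 ≤ h t ω)
    (hfadp : Adapted 𝓕 f) (hgadp : Adapted 𝓕 g) (hVadp : Adapted 𝓕 V) (hhadp : Adapted 𝓕 h)
    (hVint : ∀ t, Integrable (V t) P)
    (hineq : ∀ t, ∀ᵐ ω ∂P,
      (P[V (t + 1)|𝓕 t]) ω ≤ (1 + f t ω) * V t ω + g t ω - h t ω) :
    ∀ᵐ ω ∂P, ∃ c, Tendsto (fun t => Xp f g n V h t ω) atTop (nhds c) := by
  have hsub : Submartingale (fun t => -Xp f g n V h t) 𝓕 P := by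
    refine submartingale_nat (fun t => ((Xp_adapted hfadp hgadp hVadp hhadp) t).neg.stronglyMeasurable)
      (fun t => (Xp_integrable hVnn hfnn hgnn hhnn hfadp hgadp hVadp hhadp hVint hineq t).neg)
      fun t => ?_
    filter_upwards [condExp_neg (μ := P) (m := 𝓕 t) (Xp f g n V h (t + 1)),
      Xp_supermart hVnn hfnn hgnn hhnn hfadp hgadp hVadp hhadp hVint hineq t] with ω h1 h2
    calc -Xp f g n V h t ω ≤ -(P[Xp f g n V h (t + 1)|𝓕 t]) ω := neg_le_neg h2
      _ = (P[-Xp f g n V h (t + 1)|𝓕 t]) ω := by rw [h1]; rfl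
  have hbdd : ∀ t, eLpNorm (-Xp f g n V h t) 1 P ≤
      ((∫ ω, V 0 ω ∂P) + 2 * n).toNNReal := by
    intro t
    rw [eLpNorm_neg]
    exact eLpNorm_Xp_le hVnn hfnn hgnn hhnn hfadp hgadp hVadp hhadp hVint hineq t
  filter_upwards [hsub.exists_ae_tendsto_of_bdd hbdd] with ω ⟨c, hc⟩
  refine ⟨-c, ?_⟩
  have := hc.neg
  simpa using this

theorem aux (hVnn : ∀ t ω, 0 ≤ V t ω) (hfnn : ∀ t ω, 0 ≤ f t ω)
    (hgnn : ∀ t ω, 0 ≤ g t ω) (hhnn : ∀ t ω, 0 ≤ h t ω)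
    (hfadp : Adapted 𝓕 f) (hgadp : Adapted 𝓕 g) (hVadp : Adapted 𝓕 V) (hhadp : Adapted 𝓕 h)
    (hVint : ∀ t, Integrable (V t) P)
    (hineq : ∀ t, ∀ᵐ ω ∂P,
      (P[V (t + 1)|𝓕 t]) ω ≤ (1 + f t ω) * V t ω + g t ω - h t ω) (n : ℕ) :
    ∀ᵐ ω ∂P, (∀ t, ω ∈ okS f g n t) →
      ((∃ l : ℝ, Tendsto (fun t => V t ω) atTop (nhds l)) ∧ Summable (fun t => h t ω)) := by
  filter_upwards [Xp_tendsto (n := n) hVnn hfnn hgnn hhnn hfadp hgadp hVadp hhadp hVint hineq]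
    with ω hXc hall
  obtain ⟨c, hc⟩ := hXc
  -- truncations are trivial at ω
  have htrh : ∀ t, tr f g n h t ω = h t ω := fun t => tr_eq_of_mem (hall t)
  have htrg : ∀ t, tr f g n g t ω = g t ω := fun t => tr_eq_of_mem (hall t)
  have hVeq : ∀ t, Vs f g n V t ω = V t ω := by
    intro t
    rcases t with _ | k
    · rfl
    · exact Vs_eq hfnn hgnn (Or.inr (by simpa using hall k))
  -- the two series with weights
  set η : ℕ → ℝ := fun s => (tr f g n h s ω - tr f g n g s ω) / Ap f g n (s + 1) ω with hη
  set γ : ℕ → ℝ := fun s => tr f g n g s ω / Ap f g n (s + 1) ω with hγdef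
  have hγnn : ∀ s, 0 ≤ γ s := fun s =>
    div_nonneg (tr_nonneg hgnn s ω) (Ap_pos hfnn (s + 1) ω).le
  have hγle : ∀ s, γ s ≤ tr f g n g s ω := fun s =>
    div_le_self (tr_nonneg hgnn s ω) (one_le_Ap hfnn (s + 1) ω)
  have hγsum : Summable γ := by
    refine summable_of_sum_range_le hγnn (c := n) fun T => ?_
    exact le_trans (Finset.sum_le_sum fun s _ => hγle s) (sum_trg_le hfnn hgnn T ω)
  -- bound on X
  obtain ⟨M, hM⟩ := hc.bddAbove_range
  have hXle : ∀ t, Xp f g n V h t ω ≤ M := fun t => hM (Set.mem_range_self t)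
  -- partial sums identity
  have hXid : ∀ t, (∑ s ∈ Finset.range t, η s) = Xp f g n V h t ω
      - Vs f g n V t ω / Ap f g n t ω := by
    intro t
    unfold Xp
    ring
  -- the h-series with weights
  set θ : ℕ → ℝ := fun s => tr f g n h s ω / Ap f g n (s + 1) ω with hθdef
  have hθnn : ∀ s, 0 ≤ θ s := fun s =>
    div_nonneg (tr_nonneg hhnn s ω) (Ap_pos hfnn (s + 1) ω).le
  have hηθ : ∀ s, η s = θ s - γ s := fun s => by
    simp only [hη, hθdef, hγdef]
    rw [div_sub_div_same]
  have hθsum : Summable θ := by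
    refine summable_of_sum_range_le hθnn (c := M + n) fun T => ?_
    have e1 : (∑ s ∈ Finset.range T, θ s) = (∑ s ∈ Finset.range T, η s)
        + ∑ s ∈ Finset.range T, γ s := by
      rw [← Finset.sum_add_distrib]
      exact Finset.sum_congr rfl fun s _ => by rw [hηθ s]; ring
    rw [e1, hXid T]
    have h2 : (∑ s ∈ Finset.range T, γ s) ≤ n :=
      le_trans (Finset.sum_le_sum fun s _ => hγle s) (sum_trg_le hfnn hgnn T ω)
    have h3 : 0 ≤ Vs f g n V T ω / Ap f g n T ω :=
      div_nonneg (Vs_nonneg hVnn T ω) (Ap_pos hfnn T ω).le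
    have h4 := hXle T
    linarith
  -- summability of h
  have hsumh : Summable (fun t => h t ω) := by
    refine Summable.of_nonneg_of_le (fun t => hhnn t ω) (fun t => ?_)
      (hθsum.mul_left (Real.exp n))
    rw [← htrh t]
    have e : tr f g n h t ω = θ t * Ap f g n (t + 1) ω := by
      rw [hθdef]
      field_simp
      rw [mul_div_cancel_right₀ _ (Ap_pos hfnn (t + 1) ω).ne']
    rw [e]
    calc θ t * Ap f g n (t + 1) ω ≤ θ t * Real.exp n :=
          mul_le_mul_of_nonneg_left (Ap_le_exp hfnn hgnn (t + 1) ω) (hθnn t)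
      _ = Real.exp n * θ t := mul_comm _ _
  -- convergence of partial sums
  have hθt : Tendsto (fun T => ∑ s ∈ Finset.range T, θ s) atTop (nhds (∑' s, θ s)) :=
    hθsum.hasSum.tendsto_sum_nat
  have hγt : Tendsto (fun T => ∑ s ∈ Finset.range T, γ s) atTop (nhds (∑' s, γ s)) :=
    hγsum.hasSum.tendsto_sum_nat
  have hηt : Tendsto (fun T => ∑ s ∈ Finset.range T, η s) atTop
      (nhds ((∑' s, θ s) - ∑' s, γ s)) := by
    have := hθt.sub hγt
    refine this.congr fun T => ?_
    rw [← Finset.sum_sub_distrib]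
    exact Finset.sum_congr rfl fun s _ => (hηθ s).symm
  -- convergence of Vs/Ap
  have hVAt : Tendsto (fun t => Vs f g n V t ω / Ap f g n t ω) atTop
      (nhds (c - ((∑' s, θ s) - ∑' s, γ s))) := by
    have := hc.sub hηt
    refine this.congr fun t => ?_
    rw [hXid t]
    ring
  -- convergence of Ap
  have hAmono : Monotone (fun t => Ap f g n t ω) := fun s t hst => Ap_mono hfnn hst ω
  have hAbdd : BddAbove (Set.range fun t => Ap f g n t ω) :=
    ⟨Real.exp n, fun x ⟨t, ht⟩ => ht ▸ Ap_le_exp hfnn hgnn t ω⟩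
  have hAt : Tendsto (fun t => Ap f g n t ω) atTop (nhds (⨆ t, Ap f g n t ω)) :=
    tendsto_atTop_ciSup hAmono hAbdd
  -- conclusion
  refine ⟨⟨(c - ((∑' s, θ s) - ∑' s, γ s)) * ⨆ t, Ap f g n t ω, ?_⟩, hsumh⟩
  have := hVAt.mul hAt
  refine this.congr fun t => ?_
  rw [div_mul_cancel₀ _ (Ap_pos hfnn t ω).ne', hVeq t]

end Condexp

end RobbinsSiegmund

/-- Robbins–Siegmund theorem: if `(V_t), (f_t), (g_t), (h_t)` are nonnegative
adapted processes with `V_t` integrable and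
`E[V_{t+1} | 𝓕_t] ≤ (1 + f_t) V_t + g_t - h_t` a.s. for every `t`, and if
`Σ f_t < ∞` and `Σ g_t < ∞` a.s., then a.s. `V_t` converges (hence is bounded)
and `Σ h_t < ∞`. -/
theorem stmt_9 {Ω : Type*} {mΩ : MeasurableSpace Ω} (P : Measure Ω)
    [IsProbabilityMeasure P] (𝓕 : Filtration ℕ mΩ)
    (V f g h : ℕ → Ω → ℝ)
    (hVnn : ∀ t ω, 0 ≤ V t ω) (hfnn : ∀ t ω, 0 ≤ f t ω)
    (hgnn : ∀ t ω, 0 ≤ g t ω) (hhnn : ∀ t ω, 0 ≤ h t ω)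
    (hVadp : Adapted 𝓕 V) (hfadp : Adapted 𝓕 f)
    (hgadp : Adapted 𝓕 g) (hhadp : Adapted 𝓕 h)
    (hVint : ∀ t, Integrable (V t) P)
    (hineq : ∀ t, ∀ᵐ ω ∂P,
      (P[V (t + 1)|𝓕 t]) ω ≤ (1 + f t ω) * V t ω + g t ω - h t ω)
    (hf : ∀ᵐ ω ∂P, Summable (fun t => f t ω))
    (hg : ∀ᵐ ω ∂P, Summable (fun t => g t ω)) :
    ∀ᵐ ω ∂P, (∃ l : ℝ, Tendsto (fun t => V t ω) atTop (nhds l)) ∧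
      Summable (fun t => h t ω) := by
  have haux : ∀ n : ℕ, ∀ᵐ ω ∂P, (∀ t, ω ∈ RobbinsSiegmund.okS f g n t) →
      ((∃ l : ℝ, Tendsto (fun t => V t ω) atTop (nhds l)) ∧ Summable (fun t => h t ω)) :=
    fun n => RobbinsSiegmund.aux hVnn hfnn hgnn hhnn hfadp hgadp hVadp hhadp hVint hineq n
  rw [← ae_all_iff] at haux
  filter_upwards [hf, hg, haux] with ω hfs hgs hall
  refine hall ⌈max (∑' t, f t ω) (∑' t, g t ω)⌉₊ fun t => ⟨?_, ?_⟩
  · calc (∑ s ∈ Finset.range (t + 1), f s ω) ≤ ∑' s, f s ω :=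
        hfs.sum_le_tsum _ (fun i _ => hfnn i ω)
      _ ≤ max (∑' t, f t ω) (∑' t, g t ω) := le_max_left _ _
      _ ≤ (⌈max (∑' t, f t ω) (∑' t, g t ω)⌉₊ : ℝ) := Nat.le_ceil _
  · calc (∑ s ∈ Finset.range (t + 1), g s ω) ≤ ∑' s, g s ω :=
        hgs.sum_le_tsum _ (fun i _ => hgnn i ω)
      _ ≤ max (∑' t, f t ω) (∑' t, g t ω) := le_max_right _ _
      _ ≤ (⌈max (∑' t, f t ω) (∑' t, g t ω)⌉₊ : ℝ) := Nat.le_ceil _
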